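/- If α(h) = γ · sign(h) · |h|^ρ with γ > 0 and ρ ∈ [0,1), and a differentiable function h: [0,∞) → R satisfies ḣ(t) ≥ −α(h(t))/2 with h(0) < 0, then h reaches zero in finite time; specifically h(t) ≥ 0 for all t ≥ T* where T* = 2|h(0)|^{1−ρ}/(γ(1−ρ)). -/

import Mathlib

/-- Forward invariance of `{h ≥ 0}`: while `h < 0` its derivative is positive. -/
lemma stmt_15_inv (γ ρ : ℝ) (hγ : 0 < γ)
    (h : ℝ → ℝ) (hdiff : Differentiable ℝ h)
    (hineq : ∀ t : ℝ, 0 ≤ t → deriv h t ≥ -(γ * Real.sign (h t) * |h t| ^ ρ) / 2)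
    {t0 t : ℝ} (ht0 : 0 ≤ t0) (hh0 : 0 ≤ h t0) (htt : t0 ≤ t) : 0 ≤ h t := by
  by_contra hneg
  push_neg at hneg
  set S : Set ℝ := Set.Icc t0 t ∩ {u | 0 ≤ h u} with hS
  have hSclosed : IsClosed S :=
    isClosed_Icc.inter (isClosed_le continuous_const hdiff.continuous)
  have hSne : S.Nonempty := ⟨t0, ⟨le_refl _, htt⟩, hh0⟩
  have hSbdd : BddAbove S := ⟨t, fun x hx => hx.1.2⟩
  set s := sSup S with hs
  have hsS : s ∈ S := hSclosed.csSup_mem hSne hSbdd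
  have hst : s ≤ t := hsS.1.2
  have hst0 : t0 ≤ s := hsS.1.1
  have hslt : s < t := by
    rcases lt_or_eq_of_le hst with h' | h'
    · exact h'
    · exact absurd (h' ▸ hsS.2) (not_le.mpr hneg)
  have hnegint : ∀ u ∈ Set.Ioc s t, h u < 0 := by
    intro u hu
    by_contra hc
    push_neg at hc
    have : u ∈ S := ⟨⟨le_trans hst0 hu.1.le, hu.2⟩, hc⟩
    exact absurd (le_csSup hSbdd this) (not_le.mpr hu.1)
  have hmono : MonotoneOn h (Set.Icc s t) := by
    apply monotoneOn_of_deriv_nonneg (convex_Icc s t)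
      hdiff.continuous.continuousOn
      (hdiff.differentiableOn.mono interior_subset)
    intro x hx
    rw [interior_Icc] at hx
    have hxneg : h x < 0 := hnegint x ⟨hx.1, hx.2.le⟩
    have hx0 : (0:ℝ) ≤ x := le_trans ht0 (le_trans hst0 hx.1.le)
    have := hineq x hx0
    rw [Real.sign_of_neg hxneg] at this
    have hpow : (0:ℝ) ≤ |h x| ^ ρ := Real.rpow_nonneg (abs_nonneg _) _
    nlinarith
  have h1 := hmono ⟨le_refl _, hst⟩ ⟨hst, le_refl _⟩ hst
  have h2 : (0:ℝ) ≤ h s := hsS.2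
  linarith

/-- Finite-time convergence under the class-K function
`α(h) = γ · sign(h) · |h|^ρ`: if `ḣ(t) ≥ −α(h(t))/2` with `h(0) < 0`, then
`h(t) ≥ 0` for all `t ≥ T* = 2|h(0)|^{1−ρ}/(γ(1−ρ))`. -/
theorem stmt_15 (γ ρ : ℝ) (hγ : 0 < γ) (hρ0 : 0 ≤ ρ) (hρ1 : ρ < 1)
    (h : ℝ → ℝ) (hdiff : Differentiable ℝ h)
    (hineq : ∀ t : ℝ, 0 ≤ t → deriv h t ≥ -(γ * Real.sign (h t) * |h t| ^ ρ) / 2)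
    (h0 : h 0 < 0) :
    ∀ t : ℝ, 2 * |h 0| ^ (1 - ρ) / (γ * (1 - ρ)) ≤ t → 0 ≤ h t := by
  set A : ℝ := |h 0| ^ (1 - ρ) with hA
  have hApos : 0 < A := Real.rpow_pos_of_pos (abs_pos.mpr h0.ne) _
  have h1ρ : 0 < 1 - ρ := by linarith
  set T : ℝ := 2 * A / (γ * (1 - ρ)) with hT
  have hTpos : 0 < T := by positivity
  -- h reaches 0 before T
  have hreach : ∃ u ∈ Set.Icc (0:ℝ) T, 0 ≤ h u := by
    by_contra hc
    push_neg at hc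
    set g : ℝ → ℝ := fun u => (-h u) ^ (1 - ρ) + γ * (1 - ρ) / 2 * u with hg
    have hanti : AntitoneOn g (Set.Icc 0 T) := by
      apply antitoneOn_of_deriv_nonpos (convex_Icc 0 T)
      · apply ContinuousOn.add
        · exact (hdiff.continuous.neg.continuousOn).rpow_const
            (fun x _ => Or.inr h1ρ.le)
        · exact (continuous_const.mul continuous_id).continuousOn
      · intro x hx
        rw [interior_Icc] at hx
        have hxneg : h x < 0 := hc x ⟨hx.1.le, hx.2.le⟩
        have h1 : HasDerivAt (fun u => -h u) (-(deriv h x)) x :=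
          (hdiff x).hasDerivAt.neg
        have h2 : HasDerivAt g
            (-(deriv h x) * (1 - ρ) * (-h x) ^ (1 - ρ - 1) + γ * (1 - ρ) / 2) x := by
          exact (h1.rpow_const (Or.inl (by linarith))).add
            ((hasDerivAt_id x).const_mul (γ * (1 - ρ) / 2) |>.congr_deriv (by ring))
        exact h2.differentiableAt.differentiableWithinAt
      · intro x hx
        rw [interior_Icc] at hx
        have hxneg : h x < 0 := hc x ⟨hx.1.le, hx.2.le⟩
        have h1 : HasDerivAt (fun u => -h u) (-(deriv h x)) x :=
          (hdiff x).hasDerivAt.neg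
        have h2 : HasDerivAt g
            (-(deriv h x) * (1 - ρ) * (-h x) ^ (1 - ρ - 1) + γ * (1 - ρ) / 2) x :=
          (h1.rpow_const (Or.inl (by linarith))).add
            ((hasDerivAt_id x).const_mul (γ * (1 - ρ) / 2) |>.congr_deriv (by ring))
        rw [h2.deriv]
        have hd := hineq x hx.1.le
        rw [Real.sign_of_neg hxneg, abs_of_neg hxneg] at hd
        -- deriv h x ≥ γ * (-h x)^ρ / 2
        have hd' : γ * (-h x) ^ ρ / 2 ≤ deriv h x := by nlinarith
        have hbpos : 0 < -h x := by linarith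
        have hppos : 0 < (-h x) ^ (1 - ρ - 1) := Real.rpow_pos_of_pos hbpos _
        have hmul : (-h x) ^ ρ * (-h x) ^ (1 - ρ - 1) = (-h x) ^ (0:ℝ) := by
          rw [← Real.rpow_add hbpos]; ring_nf
        rw [Real.rpow_zero] at hmul
        have : -(deriv h x) * (1 - ρ) * (-h x) ^ (1 - ρ - 1)
            ≤ -(γ * (-h x) ^ ρ / 2) * (1 - ρ) * (-h x) ^ (1 - ρ - 1) := by
          apply mul_le_mul_of_nonneg_right _ hppos.le
          apply mul_le_mul_of_nonneg_right _ h1ρ.le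
          linarith
        have heq : -(γ * (-h x) ^ ρ / 2) * (1 - ρ) * (-h x) ^ (1 - ρ - 1)
            = -(γ * (1 - ρ) / 2) := by
          rw [show -(γ * (-h x) ^ ρ / 2) * (1 - ρ) * (-h x) ^ (1 - ρ - 1)
              = -(γ * (1 - ρ) / 2) * ((-h x) ^ ρ * (-h x) ^ (1 - ρ - 1)) by ring,
            hmul, mul_one]
        linarith
    have hfin := hanti (Set.left_mem_Icc.mpr hTpos.le)
      (Set.right_mem_Icc.mpr hTpos.le) hTpos.le
    -- g T ≤ g 0
    have hg0 : g 0 = A := by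
      simp [hg, hA, abs_of_neg h0]
    have hgT : g T = (-h T) ^ (1 - ρ) + A := by
      have : γ * (1 - ρ) / 2 * T = A := by
        rw [hT]
        field_simp
      simp [hg, this]
    have hTneg : h T < 0 := hc T ⟨hTpos.le, le_refl _⟩
    have : 0 < (-h T) ^ (1 - ρ) := Real.rpow_pos_of_pos (by linarith) _
    rw [hg0, hgT] at hfin
    linarith
  obtain ⟨u, hu, hhu⟩ := hreach
  intro t ht
  exact stmt_15_inv γ ρ hγ h hdiff hineq hu.1 hhu (le_trans hu.2 ht)
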